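/- Let D ⊆ ℝ^m, let L ∈ ℝ^{m×m}, and let (x̂_j, y_j), j = 1,…,M, be data with x̂_j ∈ D that are consistent with L, i.e. |y_i − y_j| ≤ ‖L(x̂_i − x̂_j)‖₂ for all i, j. Then the central approximation f̄(x) := ½ (max_{j} (y_j − ‖L(x − x̂_j)‖₂)) + ½ (min_{j} (y_j + ‖L(x − x̂_j)‖₂)) belongs to the Lipschitz-matrix class 𝓛(D, L) and interpolates the data: f̄(x̂_j) = y_j for each j = 1,…,M. -/
import Mathlib


open Matrix

/-- The matrix-vector product as a map on Euclidean space,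
so that `‖mulVecE L v‖` is the Euclidean 2-norm of `L v`. -/
noncomputable def mulVecE {m : ℕ} (L : Matrix (Fin m) (Fin m) ℝ)
    (v : EuclideanSpace ℝ (Fin m)) : EuclideanSpace ℝ (Fin m) :=
  Matrix.toEuclideanCLM (𝕜 := ℝ) L v

/-- The Lipschitz-matrix class `𝓛(D, L)`. -/
def MemLip {m : ℕ} (D : Set (EuclideanSpace ℝ (Fin m))) (L : Matrix (Fin m) (Fin m) ℝ)
    (f : EuclideanSpace ℝ (Fin m) → ℝ) : Prop :=
  ∀ x₁ ∈ D, ∀ x₂ ∈ D, |f x₁ - f x₂| ≤ ‖mulVecE L (x₁ - x₂)‖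

/-- The lower envelope `f₋(x) = max_j (y_j - ‖L(x - x̂_j)‖₂)` determined by data `(x̂_j, y_j)`. -/
noncomputable def lowerEnv {m M : ℕ} (L : Matrix (Fin m) (Fin m) ℝ)
    (xh : Fin M → EuclideanSpace ℝ (Fin m)) (y : Fin M → ℝ)
    (x : EuclideanSpace ℝ (Fin m)) : ℝ :=
  ⨆ j, (y j - ‖mulVecE L (x - xh j)‖)

/-- The upper envelope `f₊(x) = min_j (y_j + ‖L(x - x̂_j)‖₂)` determined by data `(x̂_j, y_j)`. -/
noncomputable def upperEnv {m M : ℕ} (L : Matrix (Fin m) (Fin m) ℝ)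
    (xh : Fin M → EuclideanSpace ℝ (Fin m)) (y : Fin M → ℝ)
    (x : EuclideanSpace ℝ (Fin m)) : ℝ :=
  ⨅ j, (y j + ‖mulVecE L (x - xh j)‖)

/-- The central approximation `f̄ = (f₋ + f₊)/2`. -/
noncomputable def centralApprox {m M : ℕ} (L : Matrix (Fin m) (Fin m) ℝ)
    (xh : Fin M → EuclideanSpace ℝ (Fin m)) (y : Fin M → ℝ)
    (x : EuclideanSpace ℝ (Fin m)) : ℝ :=
  (lowerEnv L xh y x + upperEnv L xh y x) / 2

lemma mulVecE_sub {m : ℕ} (L : Matrix (Fin m) (Fin m) ℝ)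
    (a b : EuclideanSpace ℝ (Fin m)) : mulVecE L (a - b) = mulVecE L a - mulVecE L b := by
  simp [mulVecE, map_sub]

lemma norm_mulVecE_symm {m : ℕ} (L : Matrix (Fin m) (Fin m) ℝ)
    (a b : EuclideanSpace ℝ (Fin m)) :
    ‖mulVecE L (a - b)‖ = ‖mulVecE L (b - a)‖ := by
  rw [mulVecE_sub, mulVecE_sub, norm_sub_rev]

lemma norm_mulVecE_tri {m : ℕ} (L : Matrix (Fin m) (Fin m) ℝ)
    (a b c : EuclideanSpace ℝ (Fin m)) :
    ‖mulVecE L (a - c)‖ ≤ ‖mulVecE L (a - b)‖ + ‖mulVecE L (b - c)‖ := by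
  rw [mulVecE_sub, mulVecE_sub, mulVecE_sub]
  have := norm_sub_le_norm_sub_add_norm_sub (mulVecE L a) (mulVecE L b) (mulVecE L c)
  exact this

lemma lowerEnv_sub_le {m M : ℕ} (hM : 0 < M) (L : Matrix (Fin m) (Fin m) ℝ)
    (xh : Fin M → EuclideanSpace ℝ (Fin m)) (y : Fin M → ℝ)
    (x₁ x₂ : EuclideanSpace ℝ (Fin m)) :
    lowerEnv L xh y x₁ - lowerEnv L xh y x₂ ≤ ‖mulVecE L (x₁ - x₂)‖ := by
  have : Nonempty (Fin M) := ⟨⟨0, hM⟩⟩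
  rw [sub_le_iff_le_add]
  apply ciSup_le
  intro j
  have h1 : y j - ‖mulVecE L (x₂ - xh j)‖ ≤ lowerEnv L xh y x₂ :=
    le_ciSup (f := fun i => y i - ‖mulVecE L (x₂ - xh i)‖)
      (Set.Finite.bddAbove (Set.finite_range _)) j
  have h2 := norm_mulVecE_tri L x₂ x₁ (xh j)
  rw [norm_mulVecE_symm L x₂ x₁] at h2
  linarith

lemma upperEnv_sub_le {m M : ℕ} (hM : 0 < M) (L : Matrix (Fin m) (Fin m) ℝ)
    (xh : Fin M → EuclideanSpace ℝ (Fin m)) (y : Fin M → ℝ)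
    (x₁ x₂ : EuclideanSpace ℝ (Fin m)) :
    upperEnv L xh y x₁ - upperEnv L xh y x₂ ≤ ‖mulVecE L (x₁ - x₂)‖ := by
  have : Nonempty (Fin M) := ⟨⟨0, hM⟩⟩
  rw [sub_le_comm]
  show _ ≤ upperEnv L xh y x₂
  unfold upperEnv
  apply le_ciInf
  intro j
  have h1 : upperEnv L xh y x₁ ≤ y j + ‖mulVecE L (x₁ - xh j)‖ :=
    ciInf_le (f := fun i => y i + ‖mulVecE L (x₁ - xh i)‖)
      (Set.Finite.bddBelow (Set.finite_range _)) j
  unfold upperEnv at h1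
  have h2 := norm_mulVecE_tri L x₁ x₂ (xh j)
  linarith

lemma lowerEnv_interp {m M : ℕ} (hM : 0 < M) (L : Matrix (Fin m) (Fin m) ℝ)
    (xh : Fin M → EuclideanSpace ℝ (Fin m)) (y : Fin M → ℝ)
    (hcons : ∀ i j, |y i - y j| ≤ ‖mulVecE L (xh i - xh j)‖) (j : Fin M) :
    lowerEnv L xh y (xh j) = y j := by
  have : Nonempty (Fin M) := ⟨⟨0, hM⟩⟩
  apply le_antisymm
  · apply ciSup_le
    intro i
    have := hcons i j
    rw [abs_le] at this
    have h := norm_mulVecE_symm L (xh j) (xh i)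
    linarith [this.2]
  · have h1 : y j - ‖mulVecE L (xh j - xh j)‖ ≤ lowerEnv L xh y (xh j) :=
      le_ciSup (f := fun i => y i - ‖mulVecE L (xh j - xh i)‖)
        (Set.Finite.bddAbove (Set.finite_range _)) j
    simpa [sub_self, mulVecE, map_zero] using h1

lemma upperEnv_interp {m M : ℕ} (hM : 0 < M) (L : Matrix (Fin m) (Fin m) ℝ)
    (xh : Fin M → EuclideanSpace ℝ (Fin m)) (y : Fin M → ℝ)
    (hcons : ∀ i j, |y i - y j| ≤ ‖mulVecE L (xh i - xh j)‖) (j : Fin M) :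
    upperEnv L xh y (xh j) = y j := by
  have : Nonempty (Fin M) := ⟨⟨0, hM⟩⟩
  apply le_antisymm
  · have h1 : upperEnv L xh y (xh j) ≤ y j + ‖mulVecE L (xh j - xh j)‖ :=
      ciInf_le (f := fun i => y i + ‖mulVecE L (xh j - xh i)‖)
        (Set.Finite.bddBelow (Set.finite_range _)) j
    simpa [sub_self, mulVecE, map_zero] using h1
  · apply le_ciInf
    intro i
    have := hcons i j
    rw [abs_le] at this
    have h := norm_mulVecE_symm L (xh j) (xh i)
    linarith [this.1]

/-- for data consistent with `L`, the central approximation belongs to `𝓛(D, L)`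
and interpolates the data. -/
theorem centralApprox_mem_lip_and_interp {m M : ℕ} (hM : 0 < M)
    (D : Set (EuclideanSpace ℝ (Fin m))) (L : Matrix (Fin m) (Fin m) ℝ)
    (xh : Fin M → EuclideanSpace ℝ (Fin m)) (y : Fin M → ℝ)
    (hx : ∀ j, xh j ∈ D)
    (hcons : ∀ i j, |y i - y j| ≤ ‖mulVecE L (xh i - xh j)‖) :
    MemLip D L (centralApprox L xh y) ∧ ∀ j, centralApprox L xh y (xh j) = y j := by
  constructor
  · intro x₁ _ x₂ _
    rw [abs_le]
    have hl1 := lowerEnv_sub_le hM L xh y x₁ x₂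
    have hl2 := lowerEnv_sub_le hM L xh y x₂ x₁
    have hu1 := upperEnv_sub_le hM L xh y x₁ x₂
    have hu2 := upperEnv_sub_le hM L xh y x₂ x₁
    have hs := norm_mulVecE_symm L x₁ x₂
    unfold centralApprox
    constructor <;> [linarith; linarith]
  · intro j
    unfold centralApprox
    rw [lowerEnv_interp hM L xh y hcons j, upperEnv_interp hM L xh y hcons j]
    ring
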